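/- Let a, b be monic real Hurwitz polynomials of degree n and c(s) = s^{n-1} + x₁s^{n-2} + ⋯ + x_{n-1}. Suppose Re[c(iω)/a(iω)] > 0 and Re[c(iω)/b(iω)] > 0 for all real ω. Then for every monic real polynomial h of degree n there exists δ₀ > 0 such that for all δ ∈ (0, δ₀), the polynomial c̃(s) = c(s) + δ·h(s) makes c̃/a and c̃/b both strictly positive real. -/

import Mathlib

open Polynomial

/-- A real polynomial is Hurwitz stable if all of its complex roots have
negative real part. -/
def Hurwitz (p : Polynomial ℝ) : Prop :=
  ∀ z : ℂ, (p.map (algebraMap ℝ ℂ)).IsRoot z → z.re < 0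

/-- Evaluation of a real polynomial at the purely imaginary number `i ω`. -/
noncomputable def evalI (p : Polynomial ℝ) (ω : ℝ) : ℂ :=
  Polynomial.aeval ((ω : ℂ) * Complex.I) p

/-- `c / q` is strictly positive real. -/
def SPR (c q : Polynomial ℝ) : Prop :=
  c.degree = q.degree ∧ Hurwitz q ∧ ∀ ω : ℝ, 0 < (evalI c ω / evalI q ω).re

open Filter Topology Bornology

lemma evalI_ne_zero_of_Hurwitz {q : Polynomial ℝ} (hq : Hurwitz q) (ω : ℝ) :
    evalI q ω ≠ 0 := by
  intro h0
  have hroot : (q.map (algebraMap ℝ ℂ)).IsRoot ((ω : ℂ) * Complex.I) := by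
    have h0' : Polynomial.aeval ((ω : ℂ) * Complex.I) q = 0 := h0
    simpa [Polynomial.IsRoot, Polynomial.eval_map, ← Polynomial.aeval_def] using h0'
  have := hq _ hroot
  simp [Complex.mul_re] at this

lemma continuous_evalI (p : Polynomial ℝ) : Continuous (evalI p) := by
  have h1 : Continuous (fun ω : ℝ => (ω : ℂ) * Complex.I) :=
    Complex.continuous_ofReal.mul continuous_const
  exact (Polynomial.continuous_aeval p).comp h1

lemma tendsto_mul_I_cobounded :
    Tendsto (fun ω : ℝ => (ω : ℂ) * Complex.I) (cocompact ℝ) (cobounded ℂ) := by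
  rw [← tendsto_norm_atTop_iff_cobounded]
  have h : ∀ ω : ℝ, ‖(ω : ℂ) * Complex.I‖ = ‖ω‖ := fun ω => by simp
  exact (tendsto_norm_cocompact_atTop (E := ℝ)).congr (fun ω => by simp)

lemma eventually_ne_zero_cocompact : ∀ᶠ ω : ℝ in cocompact ℝ, ω ≠ 0 := by
  have : {ω : ℝ | ω ≠ 0} ∈ cocompact ℝ :=
    mem_cocompact.mpr ⟨{0}, isCompact_singleton, fun z hz => by simpa using hz⟩
  exact this

lemma eventually_ne_zero_cobounded : ∀ᶠ z : ℂ in cobounded ℂ, z ≠ 0 := by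
  have : {z : ℂ | z ≠ 0} ∈ cocompact ℂ :=
    mem_cocompact.mpr ⟨{0}, isCompact_singleton, fun z hz => by simpa using hz⟩
  rw [Metric.cobounded_eq_cocompact]
  exact this

lemma tendsto_aeval_div_pow {r : Polynomial ℝ} {n : ℕ} (hr : r.natDegree < n) :
    Tendsto (fun z : ℂ => Polynomial.aeval z r / z ^ n) (cobounded ℂ) (𝓝 0) := by
  have hev : ∀ᶠ z : ℂ in cobounded ℂ, z ≠ 0 := eventually_ne_zero_cobounded
  have key : Tendsto (fun z : ℂ => ∑ i ∈ Finset.range n,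
      (r.coeff i : ℂ) * (z⁻¹) ^ (n - i)) (cobounded ℂ) (𝓝 0) := by
    have := tendsto_finset_sum (Finset.range n)
      (fun i (hi : i ∈ Finset.range n) =>
        (Filter.Tendsto.pow tendsto_inv₀_cobounded (n - i)).const_mul ((r.coeff i : ℂ)))
    have hz : ∀ i ∈ Finset.range n, (r.coeff i : ℂ) * (0 : ℂ) ^ (n - i) = 0 := by
      intro i hi
      rw [zero_pow (Nat.sub_ne_zero_of_lt (Finset.mem_range.mp hi)), mul_zero]
    simpa [Finset.sum_congr rfl hz] using this
  refine key.congr' ?_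
  filter_upwards [hev] with z hz
  rw [Polynomial.aeval_eq_sum_range' hr, Finset.sum_div]
  refine Finset.sum_congr rfl fun i hi => ?_
  have hi' := (Finset.mem_range.mp hi).le
  have hzn : z ^ n = z ^ (n - i) * z ^ i := by
    rw [← pow_add, Nat.sub_add_cancel hi']
  rw [Complex.real_smul, inv_pow, eq_div_iff (pow_ne_zero n hz), hzn]
  field_simp

lemma tendsto_aeval_div_pow_monic {p : Polynomial ℝ} {n : ℕ} (hn : 1 ≤ n)
    (hp : p.Monic) (hpn : p.natDegree = n) :
    Tendsto (fun z : ℂ => Polynomial.aeval z p / z ^ n) (cobounded ℂ) (𝓝 1) := by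
  have hd : (p - X ^ n).natDegree < n := by
    rcases eq_or_ne (p - X ^ n) 0 with h0 | h0
    · simpa [h0] using Nat.lt_of_lt_of_le Nat.zero_lt_one hn
    · rw [Polynomial.natDegree_lt_iff_degree_lt h0]
      have hdeg : (p - X ^ n).degree < p.degree := by
        apply Polynomial.degree_sub_lt
        · rw [Polynomial.degree_X_pow, Polynomial.degree_eq_natDegree hp.ne_zero, hpn]
        · exact hp.ne_zero
        · simp [hp.leadingCoeff, Polynomial.leadingCoeff_X_pow]
      rwa [Polynomial.degree_eq_natDegree hp.ne_zero, hpn] at hdeg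
  have h1 := tendsto_aeval_div_pow hd
  have hev : ∀ᶠ z : ℂ in cobounded ℂ, z ≠ 0 := eventually_ne_zero_cobounded
  have h2 : Tendsto (fun z : ℂ => 1 + Polynomial.aeval z (p - X ^ n) / z ^ n)
      (cobounded ℂ) (𝓝 1) := by
    simpa using tendsto_const_nhds.add h1
  refine h2.congr' ?_
  filter_upwards [hev] with z hz
  have : Polynomial.aeval z (p - X ^ n) = Polynomial.aeval z p - z ^ n := by
    rw [map_sub, map_pow, Polynomial.aeval_X]
  rw [this, sub_div, div_self (pow_ne_zero _ hz)]
  ring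

lemma tendsto_evalI_ratio {p q : Polynomial ℝ} {n : ℕ} (hn : 1 ≤ n)
    (hp : p.Monic) (hq : q.Monic) (hpn : p.natDegree = n) (hqn : q.natDegree = n) :
    Tendsto (fun ω => evalI p ω / evalI q ω) (cocompact ℝ) (𝓝 1) := by
  have hP := (tendsto_aeval_div_pow_monic hn hp hpn).comp tendsto_mul_I_cobounded
  have hQ := (tendsto_aeval_div_pow_monic hn hq hqn).comp tendsto_mul_I_cobounded
  have hdiv := hP.div hQ one_ne_zero
  rw [div_one] at hdiv
  refine hdiv.congr' ?_
  filter_upwards [eventually_ne_zero_cocompact] with ω hω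
  have hz : ((ω : ℂ) * Complex.I) ≠ 0 := by
    simp [Complex.ext_iff, hω]
  show ((fun z : ℂ => Polynomial.aeval z p / z ^ n) ((ω : ℂ) * Complex.I)) /
      ((fun z : ℂ => Polynomial.aeval z q / z ^ n) ((ω : ℂ) * Complex.I)) = _
  simp only
  rw [div_div_div_cancel_right₀ (pow_ne_zero n hz)]
  rfl

lemma main_pos {n : ℕ} (hn : 1 ≤ n) {q c h : Polynomial ℝ} (hqM : q.Monic)
    (hqn : q.natDegree = n) (hqH : Hurwitz q) (hhM : h.Monic) (hhd : h.natDegree = n)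
    (hpos : ∀ ω, 0 < (evalI c ω / evalI q ω).re) :
    ∃ δ₁ > (0 : ℝ), ∀ δ : ℝ, 0 < δ → δ < δ₁ → ∀ ω,
      0 < ((evalI c ω + (δ : ℂ) * evalI h ω) / evalI q ω).re := by
  have hq0 : ∀ ω, evalI q ω ≠ 0 := evalI_ne_zero_of_Hurwitz hqH
  set f : ℝ → ℝ := fun ω => (evalI c ω / evalI q ω).re with hf
  set g : ℝ → ℝ := fun ω => (evalI h ω / evalI q ω).re with hg
  have hfc : Continuous f :=
    Complex.continuous_re.comp ((continuous_evalI c).div (continuous_evalI q) hq0)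
  have hgc : Continuous g :=
    Complex.continuous_re.comp ((continuous_evalI h).div (continuous_evalI q) hq0)
  have hlim : Tendsto g (cocompact ℝ) (𝓝 1) := by
    have := (Complex.continuous_re.tendsto 1).comp (tendsto_evalI_ratio hn hhM hqM hhd hqn)
    simpa [hg, Function.comp_def] using this
  have hhalf : ∀ᶠ ω in cocompact ℝ, (1 : ℝ) / 2 < g ω :=
    hlim.eventually (eventually_gt_nhds (by norm_num))
  have hhalf' : {ω : ℝ | (1 : ℝ) / 2 < g ω} ∈ cocompact ℝ := hhalf
  obtain ⟨K, hKc, hK⟩ := mem_cocompact.mp hhalf'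
  set K' : Set ℝ := K ∪ {0} with hK'
  have hK'c : IsCompact K' := hKc.union isCompact_singleton
  have hK'ne : K'.Nonempty := ⟨0, Or.inr rfl⟩
  obtain ⟨ω₀, hω₀K, hmin⟩ := hK'c.exists_isMinOn hK'ne hfc.continuousOn
  obtain ⟨ω₁, hω₁K, hmax⟩ := hK'c.exists_isMaxOn hK'ne (hgc.abs).continuousOn
  set m : ℝ := f ω₀ with hm'
  have hm : 0 < m := hpos ω₀
  set M : ℝ := |g ω₁| with hM'
  have hM0 : 0 ≤ M := abs_nonneg _
  refine ⟨m / (M + 1), div_pos hm (by linarith), ?_⟩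
  intro δ hδ hδ' ω
  have key : ((evalI c ω + (δ : ℂ) * evalI h ω) / evalI q ω).re = f ω + δ * g ω := by
    rw [add_div, Complex.add_re, mul_div_assoc, Complex.re_ofReal_mul]
  rw [key]
  by_cases hωK : ω ∈ K'
  · have h1 : m ≤ f ω := hmin hωK
    have h2 : |g ω| ≤ M := hmax hωK
    have h3 : δ * M < m := by
      have : δ * (M + 1) < (m / (M + 1)) * (M + 1) :=
        mul_lt_mul_of_pos_right hδ' (by linarith)
      rw [div_mul_cancel₀ _ (by linarith : M + 1 ≠ 0)] at this
      nlinarith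
    nlinarith [neg_abs_le (g ω), mul_le_mul_of_nonneg_left h2 hδ.le]
  · have hωnK : ω ∈ Kᶜ := fun hc => hωK (Or.inl hc)
    have := hK hωnK
    have hfω := hpos ω
    have : (1 : ℝ) / 2 < g ω := this
    nlinarith

theorem stmt_6 (n : ℕ) (hn : 1 ≤ n) (a b c h : Polynomial ℝ)
    (haM : a.Monic) (hbM : b.Monic)
    (hna : a.natDegree = n) (hnb : b.natDegree = n)
    (haH : Hurwitz a) (hbH : Hurwitz b)
    (hcM : c.Monic) (hcd : c.natDegree = n - 1)
    (hhM : h.Monic) (hhd : h.natDegree = n)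
    (hpa : ∀ ω : ℝ, 0 < (evalI c ω / evalI a ω).re)
    (hpb : ∀ ω : ℝ, 0 < (evalI c ω / evalI b ω).re) :
    ∃ δ₀ > (0 : ℝ), ∀ δ : ℝ, 0 < δ → δ < δ₀ →
      SPR (c + δ • h) a ∧ SPR (c + δ • h) b := by
  obtain ⟨δa, hδa, ha⟩ := main_pos hn haM hna haH hhM hhd hpa
  obtain ⟨δb, hδb, hb⟩ := main_pos hn hbM hnb hbH hhM hhd hpb
  refine ⟨min δa δb, lt_min hδa hδb, ?_⟩
  intro δ hδ0 hδlt
  have hδa' : δ < δa := lt_of_lt_of_le hδlt (min_le_left _ _)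
  have hδb' : δ < δb := lt_of_lt_of_le hδlt (min_le_right _ _)
  have hevalI : ∀ ω, evalI (c + δ • h) ω = evalI c ω + (δ : ℂ) * evalI h ω := by
    intro ω
    unfold evalI
    rw [map_add, map_smul, Complex.real_smul]
  have hdeg : (c + δ • h).degree = (n : WithBot ℕ) := by
    have hδh : (δ • h).degree = (n : WithBot ℕ) := by
      rw [Polynomial.smul_eq_C_mul, Polynomial.degree_C_mul hδ0.ne',
        Polynomial.degree_eq_natDegree hhM.ne_zero, hhd]
    have hcdeg : c.degree < (δ • h).degree := by
      rw [hδh, Polynomial.degree_eq_natDegree hcM.ne_zero, hcd]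
      exact_mod_cast Nat.sub_lt (by omega) one_pos
    rw [Polynomial.degree_add_eq_right_of_degree_lt hcdeg, hδh]
  constructor
  · refine ⟨?_, haH, ?_⟩
    · rw [hdeg, Polynomial.degree_eq_natDegree haM.ne_zero, hna]
    · intro ω
      rw [hevalI ω]
      exact ha δ hδ0 hδa' ω
  · refine ⟨?_, hbH, ?_⟩
    · rw [hdeg, Polynomial.degree_eq_natDegree hbM.ne_zero, hnb]
    · intro ω
      rw [hevalI ω]
      exact hb δ hδ0 hδb' ω
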